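/- Let y = L_a^{-1}(x). If D_1(y) exists with 0 < D_1(y) < 1 and a^{D_0(y)}(1-a)^{D_1(y)} > 1/2, then the composition T ∘ L_a^{-1} has derivative 0 at x, where T is Takagi's function. -/

import Mathlib

open Topology Filter Set

/-- The de Rham functional equation characterizing Lebesgue's singular function `L_a`
on `[0,1]`, together with continuity. -/
def deRham (a : ℝ) (L : ℝ → ℝ) : Prop :=
  ContinuousOn L (Set.Icc 0 1) ∧
  (∀ x ∈ Set.Icc (0:ℝ) (1/2), L x = a * L (2*x)) ∧
  (∀ x ∈ Set.Icc (1/2:ℝ) 1, L x = (1-a) * L (2*x - 1) + a)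

lemma round_dist_lip (s t : ℝ) : |s - round s| - |t - round t| ≤ |s - t| := by
  have h1 : |s - round s| ≤ |s - (round t : ℤ)| := round_le s (round t)
  push_cast at h1
  linarith [abs_sub_le s t ((round t : ℤ) : ℝ), abs_sub_le s t (((round t : ℤ)):ℝ)]

lemma takagi_summable (z : ℝ) :
    Summable (fun k : ℕ => |2 ^ k * z - (round (2 ^ k * z) : ℝ)| / 2 ^ k) := by
  apply Summable.of_nonneg_of_le (fun k => by positivity)
    (fun k => ?_) ((summable_geometric_two).mul_left (1/2))
  have h := abs_sub_round ((2:ℝ)^k * z)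
  have h2 : ((1:ℝ)/2)^k = 1/2^k := by rw [div_pow, one_pow]
  rw [h2, div_mul_div_comm, one_mul]
  exact div_le_div_of_nonneg_right h (by positivity) |>.trans_eq (by ring_nf)

lemma takagi_modulus (T : ℝ → ℝ)
    (hT : ∀ z : ℝ, T z = ∑' k : ℕ, |2 ^ k * z - (round (2 ^ k * z) : ℝ)| / 2 ^ k)
    (u v : ℝ) (n : ℕ) (huv : |u - v| ≤ 1 / 2 ^ n) :
    |T u - T v| ≤ (n + 2) / 2 ^ n := by
  have hu := takagi_summable u
  have hv := takagi_summable v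
  rw [hT u, hT v, ← Summable.tsum_sub hu hv]
  have hb : ∀ k : ℕ, |(|2 ^ k * u - (round (2 ^ k * u) : ℝ)| / 2 ^ k
      - |2 ^ k * v - (round (2 ^ k * v) : ℝ)| / 2 ^ k)| ≤ min (1/2^n) (1/2^k) := by
    intro k
    have hk : (0:ℝ) < 2^k := by positivity
    have hkk : (1:ℝ)/2^k * 2^k = 1 := by field_simp
    rw [le_min_iff]
    constructor
    · rw [abs_le]
      have h1 := round_dist_lip (2^k*u) (2^k*v)
      have h2 := round_dist_lip (2^k*v) (2^k*u)
      have he : |2^k*u - 2^k*v| = 2^k * |u - v| := by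
        rw [← mul_sub, abs_mul, abs_of_pos (by positivity : (0:ℝ) < 2^k)]
      have he2 : |2^k*v - 2^k*u| = 2^k * |u - v| := by
        rw [← mul_sub, abs_mul, abs_of_pos (by positivity : (0:ℝ) < 2^k), abs_sub_comm]
      rw [he] at h1; rw [he2] at h2
      constructor
      · rw [div_sub_div_same, le_div_iff₀ hk, neg_mul]
        nlinarith [abs_nonneg (u-v)]
      · rw [div_sub_div_same, div_le_iff₀ hk]
        nlinarith [abs_nonneg (u-v)]
    · have h1 := abs_sub_round ((2:ℝ)^k * u)
      have h2 := abs_sub_round ((2:ℝ)^k * v)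
      rw [abs_le]
      constructor
      · rw [div_sub_div_same, le_div_iff₀ hk, neg_mul]
        nlinarith [abs_nonneg (2^k*u - (round (2^k*u):ℝ))]
      · rw [div_sub_div_same, div_le_iff₀ hk]
        nlinarith [abs_nonneg (2^k*v - (round (2^k*v):ℝ))]
  have hbsum : Summable (fun k : ℕ => min ((1:ℝ)/2^n) (1/2^k)) := by
    apply Summable.of_nonneg_of_le (fun k => by positivity) (fun k => min_le_right _ _)
    simpa [one_div, inv_pow] using summable_geometric_two
  have habs : Summable (fun k : ℕ => ‖(|2 ^ k * u - (round (2 ^ k * u) : ℝ)| / 2 ^ k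
      - |2 ^ k * v - (round (2 ^ k * v) : ℝ)| / 2 ^ k)‖) := by
    simpa [Real.norm_eq_abs] using (hu.sub hv).abs
  have hmain : |∑' k : ℕ, (|2 ^ k * u - (round (2 ^ k * u) : ℝ)| / 2 ^ k
      - |2 ^ k * v - (round (2 ^ k * v) : ℝ)| / 2 ^ k)| ≤ ∑' k : ℕ, min ((1:ℝ)/2^n) (1/2^k) := by
    calc _ ≤ ∑' k : ℕ, |(|2 ^ k * u - (round (2 ^ k * u) : ℝ)| / 2 ^ k
        - |2 ^ k * v - (round (2 ^ k * v) : ℝ)| / 2 ^ k)| := by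
          simpa [Real.norm_eq_abs] using norm_tsum_le_tsum_norm habs
      _ ≤ _ := Summable.tsum_le_tsum hb ((hu.sub hv).abs) hbsum
  refine hmain.trans ?_
  have hsplit := Summable.sum_add_tsum_nat_add (f := fun k : ℕ => min ((1:ℝ)/2^n) (1/2^k)) n hbsum
  rw [← hsplit]
  have h1 : ∑ i ∈ Finset.range n, min ((1:ℝ)/2^n) (1/2^i) = n * (1/2^n) := by
    rw [Finset.sum_congr rfl (fun i hi => ?_), Finset.sum_const, Finset.card_range,
      nsmul_eq_mul]
    rw [min_eq_left]
    apply div_le_div_of_nonneg_left (by norm_num) (by positivity)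
    exact pow_le_pow_right₀ (by norm_num) (Finset.mem_range.mp hi).le
  have h2 : ∑' i : ℕ, min ((1:ℝ)/2^n) (1/2^(i+n)) = 2/2^n := by
    have he : ∀ i : ℕ, min ((1:ℝ)/2^n) (1/2^(i+n)) = (1/2^n) * (1/2)^i := by
      intro i
      rw [min_eq_right, pow_add, one_div, mul_inv, div_pow, one_pow, one_div, one_div, mul_comm]
      apply div_le_div_of_nonneg_left (by norm_num) (by positivity)
      exact pow_le_pow_right₀ (by norm_num) (Nat.le_add_left n i)
    rw [tsum_congr he, tsum_mul_left, tsum_geometric_of_lt_one (by norm_num) (by norm_num)]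
    norm_num
    ring
  rw [h1, h2]
  ring_nf
  rfl

lemma deRham_zero (a : ℝ) (ha1 : a < 1) (L : ℝ → ℝ) (hL : deRham a L) : L 0 = 0 := by
  have h := hL.2.1 0 (by constructor <;> norm_num)
  have : (1 - a) * L 0 = 0 := by rw [mul_zero] at h; nlinarith [h]
  rcases mul_eq_zero.mp this with h' | h'
  · nlinarith
  · exact h'

lemma deRham_one (a : ℝ) (ha0 : 0 < a) (L : ℝ → ℝ) (hL : deRham a L) : L 1 = 1 := by
  have h := hL.2.2 1 (by constructor <;> norm_num)
  norm_num at h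
  have : a * L 1 = a := by nlinarith [h]
  exact mul_left_cancel₀ (ne_of_gt ha0) (this.trans (mul_one a).symm)

lemma digit_sum_le (δ : ℕ → ℕ) (hδ : ∀ i, δ i ≤ 1) (n : ℕ) :
    ∑ i ∈ Finset.range n, (δ i : ℝ) / 2 ^ (i+1) ≤ 1 - 1/2^n := by
  induction n with
  | zero => simp
  | succ n ih =>
    rw [Finset.sum_range_succ]
    have h1 : (δ n : ℝ) ≤ 1 := by exact_mod_cast hδ n
    have h2 : (δ n : ℝ) / 2^(n+1) ≤ 1/2^(n+1) :=
      div_le_div_of_nonneg_right h1 (by positivity) |>.trans_eq (by ring)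
    have h3 : (1:ℝ)/2^(n+1) = (1/2^n)/2 := by ring
    nlinarith [h2]

lemma digit_sum_nonneg (δ : ℕ → ℕ) (n : ℕ) :
    0 ≤ ∑ i ∈ Finset.range n, (δ i : ℝ) / 2 ^ (i+1) :=
  Finset.sum_nonneg (fun i _ => by positivity)

lemma deRham_dyadic (a : ℝ) (ha0 : 0 < a) (ha1 : a < 1) (L : ℝ → ℝ) (hL : deRham a L) :
    ∀ (n : ℕ) (δ : ℕ → ℕ), (∀ i, δ i ≤ 1) →
    L (∑ i ∈ Finset.range n, (δ i : ℝ) / 2 ^ (i+1) + 1/2^n)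
      - L (∑ i ∈ Finset.range n, (δ i : ℝ) / 2 ^ (i+1))
      = ∏ i ∈ Finset.range n, (if δ i = 1 then 1 - a else a) := by
  have keyL : ∀ t : ℝ, 0 ≤ t → t ≤ 1 → L (t/2) = a * L t := by
    intro t ht0 ht1
    have := hL.2.1 (t/2) ⟨by linarith, by linarith⟩
    rw [this]
    congr 2
    ring
  have keyR : ∀ t : ℝ, 0 ≤ t → t ≤ 1 → L ((1+t)/2) = (1-a) * L t + a := by
    intro t ht0 ht1
    have := hL.2.2 ((1+t)/2) ⟨by linarith, by linarith⟩
    rw [this]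
    congr 2
    ring
  intro n
  induction n with
  | zero =>
    intro δ hδ
    simp [deRham_zero a ha1 L hL, deRham_one a ha0 L hL]
  | succ n ih =>
    intro δ hδ
    set s : ℝ := ∑ i ∈ Finset.range n, (δ (i+1) : ℝ) / 2 ^ (i+1) with hs
    have hpn : (0:ℝ) < 1/2^n := by positivity
    have hs0 : 0 ≤ s := digit_sum_nonneg _ n
    have hs1 : s ≤ 1 - 1/2^n := digit_sum_le _ (fun i => hδ (i+1)) n
    have hsum : ∑ i ∈ Finset.range (n+1), (δ i : ℝ) / 2 ^ (i+1) = (δ 0 : ℝ)/2 + s/2 := by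
      rw [Finset.sum_range_succ' (fun i => (δ i : ℝ) / 2 ^ (i+1)), hs, Finset.sum_div, add_comm]
      congr 1
      · norm_num
      · apply Finset.sum_congr rfl
        intro i _
        rw [div_div, pow_succ]
    have ihs : L (s + 1/2^n) - L s
        = ∏ i ∈ Finset.range n, (if δ (i+1) = 1 then 1 - a else a) :=
      ih (fun i => δ (i+1)) (fun i => hδ (i+1))
    have hprod : ∏ i ∈ Finset.range (n+1), (if δ i = 1 then 1 - a else a)
        = (∏ i ∈ Finset.range n, (if δ (i+1) = 1 then 1 - a else a))
          * (if δ 0 = 1 then 1-a else a) :=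
      Finset.prod_range_succ' _ n
    rw [hsum, hprod]
    rcases Nat.le_one_iff_eq_zero_or_eq_one.mp (hδ 0) with h0 | h0
    · have g1 : (δ 0 : ℝ)/2 + s/2 + 1/2^(n+1) = (s + 1/2^n)/2 := by
        rw [h0]; push_cast; ring
      have g2 : (δ 0 : ℝ)/2 + s/2 = s/2 := by rw [h0]; push_cast; ring
      rw [g1, g2, keyL s hs0 (by linarith), keyL (s + 1/2^n) (by linarith) (by linarith),
        ← mul_sub, ihs, if_neg (by omega)]
      ring
    · have g1 : (δ 0 : ℝ)/2 + s/2 + 1/2^(n+1) = (1 + (s + 1/2^n))/2 := by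
        rw [h0]; push_cast; ring
      have g2 : (δ 0 : ℝ)/2 + s/2 = (1 + s)/2 := by rw [h0]; push_cast; ring
      rw [g1, g2, keyR s hs0 (by linarith), keyR (s + 1/2^n) (by linarith) (by linarith),
        ihs.symm, if_pos h0]
      ring

lemma run_small (S : ℕ → ℝ) (d : ℝ) (hd1 : d < 1)
    (hS : Tendsto (fun n : ℕ => S n / n) atTop (𝓝 d)) (K : ℕ) :
    ∃ N, ∀ n ≥ N, ∀ r : ℕ, S (n+1+r) - S (n+1) = r → (K:ℝ) * r ≤ n := by
  set δ : ℝ := (1-d)/(16*(K+1)) with hδdef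
  have hK0 : (0:ℝ) ≤ (K:ℝ) := by positivity
  have hd' : (0:ℝ) < 1 - d := by linarith
  have hδ0 : 0 < δ := by positivity
  have happrox : ∃ N₀, ∀ j ≥ N₀, |S j - d * j| ≤ δ * j := by
    obtain ⟨N₀, hN₀⟩ := Metric.tendsto_atTop.mp hS δ hδ0
    refine ⟨N₀ + 1, fun j hj => ?_⟩
    have hj1 : 1 ≤ j := by omega
    have hjR : (1:ℝ) ≤ (j:ℝ) := by exact_mod_cast hj1
    have h := hN₀ j (by omega)
    rw [Real.dist_eq] at h
    have heq : S j - d * j = (S j / j - d) * j := by field_simp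
    rw [heq, abs_mul, abs_of_pos (by linarith : (0:ℝ) < (j:ℝ))]
    exact mul_le_mul_of_nonneg_right h.le (by linarith)
  obtain ⟨N₀, hN₀⟩ := happrox
  refine ⟨N₀ + 1, fun n hn r hr => ?_⟩
  have h1 := hN₀ (n+1) (by omega)
  have h2 := hN₀ (n+1+r) (by omega)
  have hn1 : (1:ℝ) ≤ (n:ℝ) := by exact_mod_cast (by omega : 1 ≤ n)
  have hr0 : (0:ℝ) ≤ (r:ℝ) := by positivity
  rw [abs_le] at h1 h2
  push_cast at h1 h2 hr ⊢
  have hkey : (1-d) * r ≤ δ * (2*(n:ℝ)+2+r) := by nlinarith [h1.1, h1.2, h2.1, h2.2]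
  rw [hδdef] at hkey
  have h16 : (0:ℝ) < 16*((K:ℝ)+1) := by positivity
  have key2 := mul_le_mul_of_nonneg_left hkey h16.le
  have hre : 16*((K:ℝ)+1) * ((1-d)/(16*((K:ℝ)+1)) * (2*(n:ℝ)+2+(r:ℝ)))
      = (1-d)*(2*(n:ℝ)+2+(r:ℝ)) := by field_simp
  rw [hre] at key2
  have key3 : (1-d) * (16*((K:ℝ)+1)*(r:ℝ)) ≤ (1-d) * (2*(n:ℝ)+2+(r:ℝ)) := by nlinarith [key2]
  have hstep := (mul_le_mul_iff_right₀ hd').mp key3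
  nlinarith [hstep]

lemma geom_dominate (β γ η : ℝ) (hβ0 : 0 < β) (hβ1 : β < 1) (K : ℕ) (hK0 : K ≠ 0)
    (hq : 1 < 2^K * β^(K+1)) (hγ : 0 < γ) (hη : 0 < η) :
    ∃ N : ℕ, ∀ n : ℕ, n ≥ N → ∀ r : ℕ, (K:ℝ) * r ≤ n → ((n:ℝ)+2)/2^n ≤ η * γ * β^(n+1+r) := by
  set q : ℝ := 2^K * β^(K+1) with hqdef
  have hq0 : 0 < q := by positivity
  have hnorm : ‖1/q‖ < 1 := by
    rw [Real.norm_eq_abs, abs_of_pos (by positivity), div_lt_one hq0]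
    exact hq
  have htend := (summable_pow_mul_geometric_of_norm_lt_one K hnorm).tendsto_atTop_zero
  set C : ℝ := (η*γ*β)^K with hCdef
  have hC0 : (0:ℝ) < C/3^K := by positivity
  have hevent := htend.eventually_lt_const hC0
  obtain ⟨N3, hN3⟩ := eventually_atTop.mp hevent
  refine ⟨max N3 1, fun n hn r hKr => ?_⟩
  have hn1 : 1 ≤ n := le_trans (le_max_right _ _) hn
  have hn1R : (1:ℝ) ≤ (n:ℝ) := by exact_mod_cast hn1
  have hbound := hN3 n (le_trans (le_max_left _ _) hn)
  have hqn : (0:ℝ) < q^n := by positivity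
  have h2 : ((n:ℝ))^K < (C/3^K) * q^n := by
    have he : ((n:ℝ))^K * (1/q)^n = ((n:ℝ))^K / q^n := by
      rw [div_pow, one_pow]
      ring
    rw [he, div_lt_iff₀ hqn] at hbound
    exact hbound
  have h3 : ((n:ℝ)+2)^K ≤ 3^K * ((n:ℝ))^K := by
    rw [← mul_pow]
    exact pow_le_pow_left₀ (by linarith) (by linarith) K
  have h4 : ((n:ℝ)+2)^K < C * q^n := by
    have h5 : (3:ℝ)^K * ((n:ℝ))^K < 3^K * ((C/3^K) * q^n) :=
      mul_lt_mul_of_pos_left h2 (by positivity)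
    have h6 : (3:ℝ)^K * ((C/3^K) * q^n) = C * q^n := by field_simp
    rw [h6] at h5
    linarith
  have hrK : r * K ≤ n := by
    have hc : ((r * K : ℕ) : ℝ) ≤ (n:ℝ) := by push_cast; nlinarith [hKr]
    exact_mod_cast hc
  have hβrK : β^n ≤ β^(r*K) := pow_le_pow_of_le_one hβ0.le hβ1.le hrK
  apply (pow_le_pow_iff_left₀ (by positivity) (by positivity) hK0).mp
  have h2nK : ((2:ℝ)^n)^K = ((2:ℝ)^K)^n := by rw [← pow_mul, ← pow_mul, Nat.mul_comm]
  have hqe : q^n = ((2:ℝ)^K)^n * (β^(K+1))^n := by rw [hqdef, mul_pow]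
  have hfin : C * (β^(K+1))^n ≤ (η*γ*β^(n+1+r))^K := by
    have e1 : C * (β^(K+1))^n = (η*γ)^K * β^(K + (K+1)*n) := by
      rw [hCdef, mul_pow, ← pow_mul, mul_assoc, ← pow_add]
    have e2 : (η*γ*β^(n+1+r))^K = (η*γ)^K * β^((n+1+r)*K) := by
      rw [mul_pow, ← pow_mul]
    have e3 : β^(K + (K+1)*n) = β^(K + K*n) * β^n := by
      rw [← pow_add]
      congr 1
      ring
    have e4 : β^((n+1+r)*K) = β^(K + K*n) * β^(r*K) := by
      rw [← pow_add]
      congr 1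
      ring
    rw [e1, e2, e3, e4]
    apply mul_le_mul_of_nonneg_left _ (by positivity)
    exact mul_le_mul_of_nonneg_left hβrK (by positivity)
  calc (((n:ℝ)+2)/2^n)^K
      = ((n:ℝ)+2)^K / (2^n)^K := div_pow _ _ K
    _ ≤ C * q^n / (2^n)^K := div_le_div_of_nonneg_right h4.le (by positivity)
    _ = C * (β^(K+1))^n := by
        rw [hqe, h2nK]
        have hne : ((2:ℝ)^K)^n ≠ 0 := by positivity
        field_simp
    _ ≤ (η*γ*β^(n+1+r))^K := hfin

set_option maxHeartbeats 2000000 in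
theorem takagi_comp_inverse_deriv_zero (a : ℝ) (ha0 : 0 < a) (ha1 : a < 1)
    (ha : a ≠ 1/2) (L : ℝ → ℝ) (hL : deRham a L)
    (hmono : StrictMonoOn L (Set.Icc 0 1))
    (M : ℝ → ℝ) (hM : ∀ y ∈ Set.Icc (0:ℝ) 1, M (L y) = y)
    (hM2 : ∀ x ∈ Set.Icc (0:ℝ) 1, L (M x) = x)
    (T : ℝ → ℝ)
    (hT : ∀ z : ℝ, T z = ∑' k : ℕ, |2 ^ k * z - (round (2 ^ k * z) : ℝ)| / 2 ^ k)
    (x : ℝ) (hx : x ∈ Set.Icc (0:ℝ) 1)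
    (ε : ℕ → ℕ) (hε : ∀ n, ε n ≤ 1)
    (hinf1 : ∀ N, ∃ n ≥ N, ε n = 1) (hinf0 : ∀ N, ∃ n ≥ N, ε n = 0)
    (hy : M x = ∑' n : ℕ, (ε (n+1) : ℝ) / 2 ^ (n+1))
    (d : ℝ)
    (hd : Tendsto (fun n : ℕ => (∑ k ∈ Finset.range n, (ε (k+1) : ℝ)) / n)
      atTop (𝓝 d))
    (hd0 : 0 < d) (hd1 : d < 1)
    (hcrit : a ^ (1 - d) * (1-a) ^ d > 1/2) :
    Tendsto (fun h : ℝ => (T (M (x+h)) - T (M x)) / h) (𝓝[≠] 0) (𝓝 0) := by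
  -- basic constants
  have ha1' : 0 < 1 - a := by linarith
  set γ : ℝ := min a (1 - a) with hγdef
  have hγ0 : 0 < γ := lt_min ha0 ha1'
  have hγa : γ ≤ a := min_le_left _ _
  have hγa' : γ ≤ 1 - a := min_le_right _ _
  -- digit objects
  set el : ℕ → ℝ := fun n => ∑ i ∈ Finset.range n, (ε (i+1) : ℝ) / 2 ^ (i+1) with heldef
  set P : ℕ → ℝ := fun n => ∏ i ∈ Finset.range n, (if ε (i+1) = 1 then 1 - a else a)
    with hPdef
  set y : ℝ := M x with hydef
  have hel0 : ∀ n, 0 ≤ el n := fun n => digit_sum_nonneg _ n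
  have hel1 : ∀ n, el n ≤ 1 - 1/2^n := fun n => digit_sum_le _ (fun i => hε (i+1)) n
  have hpow01 : ∀ n : ℕ, 0 < (1:ℝ)/2^n := fun n => by positivity
  have hpowle1 : ∀ n : ℕ, (1:ℝ)/2^n ≤ 1 := by
    intro n
    rw [div_le_one (by positivity)]
    exact one_le_pow₀ (by norm_num)
  have hel_mem : ∀ n, el n ∈ Set.Icc (0:ℝ) 1 :=
    fun n => ⟨hel0 n, by linarith [hel1 n, hpow01 n]⟩
  have hrt_mem : ∀ n, el n + 1/2^n ∈ Set.Icc (0:ℝ) 1 :=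
    fun n => ⟨by positivity, by linarith [hel1 n]⟩
  have hmid_mem : ∀ n, el n + 1/2^(n+1) ∈ Set.Icc (0:ℝ) 1 := by
    intro n
    have h2 : (1:ℝ)/2^(n+1) ≤ 1/2^n :=
      div_le_div_of_nonneg_left (by norm_num) (by positivity)
        (pow_le_pow_right₀ (by norm_num) (Nat.le_succ n))
    exact ⟨by positivity, by linarith [hel1 n]⟩
  -- summability of the digit series
  have hsumm : Summable (fun n : ℕ => (ε (n+1) : ℝ) / 2 ^ (n+1)) := by
    apply Summable.of_nonneg_of_le (fun k => by positivity) (fun k => ?_)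
      (summable_geometric_two.mul_left (1/2))
    have h1 : (ε (k+1) : ℝ) ≤ 1 := by exact_mod_cast hε (k+1)
    have : ((1:ℝ)/2) * (1/2)^k = 1/2^(k+1) := by
      rw [div_pow, one_pow, div_mul_div_comm, one_mul, ← pow_succ']
    rw [this]
    exact div_le_div_of_nonneg_right h1 (by positivity) |>.trans_eq (by ring)
  -- position of y within dyadic intervals
  have hgs : ∀ n : ℕ, Summable (fun i : ℕ => (1:ℝ) / 2 ^ (i + n + 1)) := by
    intro n
    apply Summable.of_nonneg_of_le (fun i => by positivity) (fun i => ?_) summable_geometric_two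
    rw [div_pow, one_pow]
    apply div_le_div_of_nonneg_left (by norm_num) (by positivity)
    exact pow_le_pow_right₀ (by norm_num) (by omega)
  have hgeo : ∀ n : ℕ, ∑' i : ℕ, (1:ℝ) / 2 ^ (i + n + 1) = 1/2^n := by
    intro n
    have h : ∀ i : ℕ, (1:ℝ) / 2 ^ (i + n + 1) = (1/2^(n+1)) * (1/2)^i := by
      intro i
      rw [div_pow, one_pow, div_mul_div_comm, one_mul, ← pow_add]
      congr 2
      ring
    rw [tsum_congr h, tsum_mul_left, tsum_geometric_of_lt_one (by norm_num) (by norm_num),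
      pow_succ]
    norm_num
    try ring
  have htails : ∀ n : ℕ, Summable (fun i : ℕ => (ε (i + n + 1) : ℝ) / 2 ^ (i + n + 1)) := by
    intro n
    apply Summable.of_nonneg_of_le (fun i => by positivity) (fun i => ?_) (hgs n)
    have h1 : (ε (i+n+1) : ℝ) ≤ 1 := by exact_mod_cast hε (i+n+1)
    exact div_le_div_of_nonneg_right h1 (by positivity) |>.trans_eq (by rw [one_div])
  have hytail : ∀ n : ℕ, y = el n + ∑' i : ℕ, (ε (i + n + 1) : ℝ) / 2 ^ (i + n + 1) := by
    intro n
    have hsplit := Summable.sum_add_tsum_nat_add (f := fun k : ℕ => (ε (k + 1) : ℝ) / 2 ^ (k + 1)) n hsumm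
    rw [hy, ← hsplit]
  have hyel : ∀ n, el n < y ∧ y < el n + 1/2^n := by
    intro n
    have htail_pos : 0 < ∑' i : ℕ, (ε (i + n + 1) : ℝ) / 2 ^ (i + n + 1) := by
      obtain ⟨m, hm1, hm2⟩ := hinf1 (n+1)
      have hmn : m - (n+1) + n + 1 = m := by omega
      apply Summable.tsum_pos (htails n) (fun i => by positivity) (m - (n+1))
      rw [hmn, hm2]
      norm_num
    have hnonneg : ∀ i : ℕ, 0 ≤ ((1:ℝ) - (ε (i+n+1) : ℝ))/2^(i+n+1) := by
      intro i
      have h1 : (ε (i+n+1) : ℝ) ≤ 1 := by exact_mod_cast hε (i+n+1)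
      apply div_nonneg (by linarith) (by positivity)
    have hcs : Summable (fun i : ℕ => ((1:ℝ) - (ε (i + n + 1) : ℝ)) / 2 ^ (i + n + 1)) := by
      apply Summable.of_nonneg_of_le hnonneg (fun i => ?_) (hgs n)
      apply div_le_div_of_nonneg_right _ (by positivity)
      have h0 : (0:ℝ) ≤ (ε (i+n+1) : ℝ) := by positivity
      linarith
    have hcompl_pos : 0 < ∑' i : ℕ, ((1:ℝ) - (ε (i + n + 1) : ℝ)) / 2 ^ (i + n + 1) := by
      obtain ⟨m, hm1, hm2⟩ := hinf0 (n+1)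
      have hmn : m - (n+1) + n + 1 = m := by omega
      apply Summable.tsum_pos hcs hnonneg (m - (n+1))
      rw [hmn, hm2]
      norm_num
    have hdecomp : ∑' i : ℕ, (ε (i + n + 1) : ℝ) / 2 ^ (i + n + 1)
        + ∑' i : ℕ, ((1:ℝ) - (ε (i + n + 1) : ℝ)) / 2 ^ (i + n + 1)
        = ∑' i : ℕ, (1:ℝ) / 2 ^ (i + n + 1) := by
      rw [← Summable.tsum_add (htails n) hcs]
      apply tsum_congr
      intro i
      rw [← add_div]
      congr 1
      ring
    have hg := hgeo n
    have hyt := hytail n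
    constructor
    · rw [hyt]; linarith
    · rw [hyt]; linarith
  -- global facts about y and L
  have hel00 : el 0 = 0 := Finset.sum_range_zero _
  have hy0 : 0 < y := by
    have h := (hyel 0).1
    rw [hel00] at h
    exact h
  have hy1 : y < 1 := by
    have h := (hyel 0).2
    rw [hel00] at h
    norm_num at h
    exact h
  have hy_mem : y ∈ Set.Icc (0:ℝ) 1 := ⟨hy0.le, hy1.le⟩
  have hxy : L y = x := hM2 x hx
  have hLmono : MonotoneOn L (Set.Icc 0 1) := hmono.monotoneOn
  have hL0 : L 0 = 0 := deRham_zero a ha1 L hL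
  have hL1 : L 1 = 1 := deRham_one a ha0 L hL
  have h0mem : (0:ℝ) ∈ Set.Icc (0:ℝ) 1 := by norm_num
  have h1mem : (1:ℝ) ∈ Set.Icc (0:ℝ) 1 := by norm_num
  have hel_succ : ∀ n, el (n+1) = el n + (ε (n+1) : ℝ)/2^(n+1) :=
    fun n => Finset.sum_range_succ _ n
  have hMval : ∀ t, t ∈ Set.Icc (0:ℝ) 1 → M t ∈ Set.Icc (0:ℝ) 1 := by
    intro t ht
    have hsub := intermediate_value_Icc (by norm_num : (0:ℝ) ≤ 1) hL.1
    rw [hL0, hL1] at hsub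
    obtain ⟨u, hu, hut⟩ := hsub ht
    rw [← hut, hM u hu]
    exact hu
  -- measures of dyadic subintervals
  have hmidrt : ∀ n, L (el n + 1/2^n) - L (el n + 1/2^(n+1)) = P n * (1-a) := by
    intro n
    have hδ : ∀ i, (if i = n then 1 else ε (i+1)) ≤ 1 := by
      intro i
      split
      · norm_num
      · exact hε (i+1)
    have key := deRham_dyadic a ha0 ha1 L hL (n+1) (fun i => if i = n then 1 else ε (i+1)) hδ
    have hsum_eq : ∑ i ∈ Finset.range (n+1), ((if i = n then 1 else ε (i+1) : ℕ) : ℝ)/2^(i+1)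
        = el n + 1/2^(n+1) := by
      rw [Finset.sum_range_succ, if_pos rfl]
      congr 1
      · apply Finset.sum_congr rfl
        intro i hi
        rw [if_neg (Finset.mem_range.mp hi).ne]
      · norm_num
    have hprod_eq : (∏ i ∈ Finset.range (n+1),
        (if (if i = n then 1 else ε (i+1)) = 1 then 1-a else a)) = P n * (1-a) := by
      rw [Finset.prod_range_succ, if_pos rfl]
      congr 1
      apply Finset.prod_congr rfl
      intro i hi
      rw [if_neg (Finset.mem_range.mp hi).ne]
    simp only [hsum_eq, hprod_eq] at key
    have harg : el n + 1/2^(n+1) + 1/2^(n+1) = el n + 1/2^n := by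
      rw [pow_succ]
      ring
    rw [harg] at key
    exact key
  have hleftmid : ∀ n, L (el n + 1/2^(n+1)) - L (el n) = P n * a := by
    intro n
    have hδ : ∀ i, (if i = n then 0 else ε (i+1)) ≤ 1 := by
      intro i
      split
      · norm_num
      · exact hε (i+1)
    have key := deRham_dyadic a ha0 ha1 L hL (n+1) (fun i => if i = n then 0 else ε (i+1)) hδ
    have hsum_eq : ∑ i ∈ Finset.range (n+1), ((if i = n then 0 else ε (i+1) : ℕ) : ℝ)/2^(i+1)
        = el n := by
      rw [Finset.sum_range_succ, if_pos rfl]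
      norm_num
      apply Finset.sum_congr rfl
      intro i hi
      rw [if_neg (Finset.mem_range.mp hi).ne]
    have hprod_eq : (∏ i ∈ Finset.range (n+1),
        (if (if i = n then 0 else ε (i+1)) = 1 then 1-a else a)) = P n * a := by
      rw [Finset.prod_range_succ, if_pos rfl]
      congr 1
      apply Finset.prod_congr rfl
      intro i hi
      rw [if_neg (Finset.mem_range.mp hi).ne]
    simp only [hsum_eq, hprod_eq] at key
    exact key
  -- positivity of the products
  have hP_pos : ∀ n, 0 < P n := by
    intro n
    apply Finset.prod_pos
    intro i _
    split
    · linarith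
    · exact ha0
  -- digit counting
  set Sr : ℕ → ℝ := fun n => ∑ i ∈ Finset.range n, (ε (i+1) : ℝ) with hSrdef
  have hSr_succ : ∀ j, Sr (j+1) = Sr j + (ε (j+1) : ℝ) := fun j => Finset.sum_range_succ _ j
  have hdSr : Tendsto (fun n : ℕ => Sr n / n) atTop (𝓝 d) := hd
  have hlogP : ∀ n, Real.log (P n) = ((n:ℝ) - Sr n) * Real.log a + Sr n * Real.log (1-a) := by
    intro n
    induction n with
    | zero => simp [hPdef, hSrdef]
    | succ n ih =>
      have hPs : P (n+1) = P n * (if ε (n+1) = 1 then 1-a else a) := Finset.prod_range_succ _ n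
      have hcpos : (0:ℝ) < (if ε (n+1) = 1 then 1-a else a) := by
        split
        · linarith
        · exact ha0
      rw [hPs, Real.log_mul (hP_pos n).ne' hcpos.ne', ih, hSr_succ]
      rcases Nat.le_one_iff_eq_zero_or_eq_one.mp (hε (n+1)) with h0 | h0
      · rw [h0, if_neg (by omega)]
        push_cast
        ring
      · rw [h0, if_pos rfl]
        push_cast
        ring
  -- the exponential rate β
  set lam : ℝ := (1-d) * Real.log a + d * Real.log (1-a) with hlamdef
  have hloga : Real.log a < 0 := Real.log_neg ha0 ha1
  have hlogb : Real.log (1-a) < 0 := Real.log_neg ha1' (by linarith)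
  have hlam_neg : lam < 0 := by nlinarith
  have hlam_gt : Real.log (1/2) < lam := by
    have hstep := Real.log_lt_log (by norm_num : (0:ℝ) < 1/2) hcrit
    rwa [Real.log_mul (Real.rpow_pos_of_pos ha0 _).ne' (Real.rpow_pos_of_pos ha1' _).ne',
      Real.log_rpow ha0, Real.log_rpow ha1'] at hstep
  have hlog2 : Real.log (1/2) = - Real.log 2 := by rw [one_div, Real.log_inv]
  set t0 : ℝ := (lam + Real.log 2)/3 with ht0def
  have ht0 : 0 < t0 := by
    rw [ht0def]
    rw [hlog2] at hlam_gt
    linarith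
  set β : ℝ := Real.exp (lam - t0) with hβdef
  have hβpos : 0 < β := Real.exp_pos _
  have hβlt1 : β < 1 := by
    rw [hβdef, Real.exp_lt_one_iff]
    linarith
  have hβhalf : 1/2 < β := by
    have he : (1/2:ℝ) = Real.exp (Real.log (1/2)) := (Real.exp_log (by norm_num)).symm
    rw [he, hβdef]
    apply Real.exp_lt_exp.mpr
    rw [hlog2]
    rw [hlog2] at hlam_gt
    linarith
  -- eventually P n ≥ β^n
  have hNβ : ∃ N₁ : ℕ, ∀ n ≥ N₁, β ^ n ≤ P n := by
    have hbracket : Tendsto (fun n : ℕ => (1 - Sr n / n) * Real.log a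
        + (Sr n / n) * Real.log (1-a)) atTop (𝓝 lam) := by
      have hc := (((tendsto_const_nhds (x := (1:ℝ))).sub hdSr).mul_const (Real.log a)).add
        (hdSr.mul_const (Real.log (1-a)))
      simpa using hc
    obtain ⟨N, hN⟩ := eventually_atTop.mp
      (hbracket.eventually_const_le (show lam - t0 < lam by linarith))
    refine ⟨max N 1, fun n hn => ?_⟩
    have hn1 : 1 ≤ n := le_trans (le_max_right _ _) hn
    have hb := hN n (le_trans (le_max_left _ _) hn)
    have hnpos : (0:ℝ) < (n:ℝ) := by exact_mod_cast hn1
    have hlogPn : Real.log (P n) = (n:ℝ) * ((1 - Sr n / n) * Real.log a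
        + (Sr n / n) * Real.log (1-a)) := by
      rw [hlogP n]
      field_simp
      try ring
    have hge : (n:ℝ) * (lam - t0) ≤ Real.log (P n) := by
      rw [hlogPn]
      exact mul_le_mul_of_nonneg_left hb hnpos.le
    calc β ^ n = Real.exp ((n:ℝ) * (lam - t0)) := by rw [hβdef, Real.exp_nat_mul]
      _ ≤ Real.exp (Real.log (P n)) := Real.exp_le_exp.mpr hge
      _ = P n := Real.exp_log (hP_pos n)
  obtain ⟨NB, hNB⟩ := hNβ
  -- the exponent K
  obtain ⟨K₀, hK₀⟩ := pow_unbounded_of_one_lt (1/β) (show (1:ℝ) < 2*β by linarith)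
  set K : ℕ := K₀ + 1 with hKdef
  have hKne : K ≠ 0 := by omega
  have hKq : 1/β < (2*β)^K := by
    apply lt_of_lt_of_le hK₀
    exact pow_le_pow_right₀ (by linarith) (Nat.le_succ K₀)
  have hq1 : 1 < 2^K * β^(K+1) := by
    have h1 : 1 < (2*β)^K * β := (div_lt_iff₀ hβpos).mp hKq
    calc (1:ℝ) < (2*β)^K * β := h1
      _ = 2^K * β^(K+1) := by
          rw [mul_pow, pow_succ]
          ring
  -- run length bounds
  obtain ⟨Nr1, hNr1⟩ := run_small Sr d hd1 hdSr K
  have htendS' : Tendsto (fun n : ℕ => ((n:ℝ) - Sr n) / n) atTop (𝓝 (1-d)) := by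
    apply Tendsto.congr' _ ((tendsto_const_nhds (x := (1:ℝ))).sub hdSr)
    filter_upwards [eventually_ge_atTop 1] with n hn
    have hnpos : (0:ℝ) < (n:ℝ) := by exact_mod_cast hn
    field_simp
  obtain ⟨Nr0, hNr0⟩ := run_small (fun n => (n:ℝ) - Sr n) (1-d) (by linarith) htendS' K
  -- limits of the dyadic endpoints
  have hpow_tend : Tendsto (fun j : ℕ => (1:ℝ)/2^j) atTop (𝓝 0) := by
    have h := tendsto_pow_atTop_nhds_zero_of_lt_one (by norm_num : (0:ℝ) ≤ 1/2)
      (by norm_num : (1/2:ℝ) < 1)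
    apply h.congr
    intro j
    rw [div_pow, one_pow]
  have hrt_tend : Tendsto (fun j : ℕ => L (el j + 1/2^j)) atTop (𝓝 x) := by
    have h1 : Tendsto (fun j : ℕ => el j + 1/2^j) atTop (𝓝 y) := by
      apply tendsto_of_tendsto_of_tendsto_of_le_of_le tendsto_const_nhds
        (by have hh := (tendsto_const_nhds (x := y)).add hpow_tend
            rwa [add_zero] at hh)
        (fun j => (hyel j).2.le) (fun j => by linarith [(hyel j).1])
    have hcy : ContinuousAt L y := hL.1.continuousAt (Icc_mem_nhds hy0 hy1)
    have := hcy.tendsto.comp h1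
    rwa [hxy] at this
  have hel_tend : Tendsto (fun j : ℕ => L (el j)) atTop (𝓝 x) := by
    have h1 : Tendsto (fun j : ℕ => el j) atTop (𝓝 y) := by
      apply tendsto_of_tendsto_of_tendsto_of_le_of_le
        (by have hh := (tendsto_const_nhds (x := y)).sub hpow_tend
            rwa [sub_zero] at hh)
        tendsto_const_nhds
        (fun j => by linarith [(hyel j).2]) (fun j => (hyel j).1.le)
    have hcy : ContinuousAt L y := hL.1.continuousAt (Icc_mem_nhds hy0 hy1)
    have := hcy.tendsto.comp h1
    rwa [hxy] at this
  have hel_mono : Monotone el := by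
    apply monotone_nat_of_le_succ
    intro j
    rw [hel_succ j]
    have : (0:ℝ) ≤ (ε (j+1) : ℝ)/2^(j+1) := by positivity
    linarith
  have hrt_anti : Antitone (fun j : ℕ => el j + 1/2^j) := by
    apply antitone_nat_of_succ_le
    intro j
    rw [hel_succ j]
    have h1 : (ε (j+1) : ℝ) ≤ 1 := by exact_mod_cast hε (j+1)
    have h2 : (ε (j+1) : ℝ)/2^(j+1) ≤ 1/2^(j+1) :=
      div_le_div_of_nonneg_right h1 (by positivity) |>.trans_eq (by ring)
    have h3 : (1:ℝ)/2^(j+1) + 1/2^(j+1) = 1/2^j := by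
      rw [pow_succ]
      ring
    linarith
  -- final argument
  rw [Metric.tendsto_nhdsWithin_nhds]
  intro η hη
  obtain ⟨N3, hN3⟩ := geom_dominate β γ η hβpos hβlt1 K hKne hq1 hγ0 hη
  set N : ℕ := max (max NB Nr1) (max Nr0 N3) + 1 with hNdef
  have hLrtN : x < L (el N + 1/2^N) := by
    rw [← hxy]
    exact hmono hy_mem (hrt_mem N) (hyel N).2
  have hLelN : L (el N) < x := by
    rw [← hxy]
    exact hmono (hel_mem N) hy_mem (hyel N).1
  refine ⟨min (L (el N + 1/2^N) - x) (x - L (el N)),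
    lt_min (by linarith only [hLrtN]) (by linarith only [hLelN]), ?_⟩
  intro h hmem hdist
  rw [Set.mem_compl_singleton_iff] at hmem
  rw [Real.dist_eq, sub_zero] at hdist ⊢
  rcases hmem.lt_or_gt with hneg | hpos
  · -- negative h
    have hhlb : L (el N) < x + h := by
      have hm := lt_of_lt_of_le hdist (min_le_right _ _)
      rw [abs_of_neg hneg] at hm
      linarith only [hm]
    have helN_ge0 : 0 ≤ L (el N) := by
      have h2 := hLmono h0mem (hel_mem N) (hel0 N)
      rw [hL0] at h2
      exact h2
    have hxh_mem : x + h ∈ Set.Icc (0:ℝ) 1 :=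
      ⟨by linarith only [hhlb, helN_ge0], by linarith only [hneg, hx.2]⟩
    have hex : ∃ j : ℕ, x + h < L (el j) :=
      (hel_tend.eventually_const_lt (by linarith only [hneg] : x + h < x)).exists
    have hm'N : N < Nat.find hex := by
      rw [Nat.lt_find_iff]
      intro j hjN
      push_neg
      have helmono : el j ≤ el N := hel_mono hjN
      have h2 := hLmono (hel_mem j) (hel_mem N) helmono
      linarith only [h2, hhlb]
    set n : ℕ := Nat.find hex - 1 with hndef
    have hm'eq : Nat.find hex = n + 1 := by omega
    clear_value n
    have hnN : N ≤ n := by omega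
    have hub : L (el n) ≤ x + h := by
      have hmin := Nat.find_min hex (show n < Nat.find hex by omega)
      push_neg at hmin
      exact hmin
    have hlb : x + h < L (el (n+1)) := by
      rw [← hm'eq]
      exact Nat.find_spec hex
    have hyh_mem := hMval (x+h) hxh_mem
    have hLyh : L (M (x+h)) = x + h := hM2 _ hxh_mem
    have hyhlt : M (x+h) < y := by
      by_contra hc
      push_neg at hc
      have hcc := hLmono hy_mem hyh_mem hc
      rw [hLyh, hxy] at hcc
      linarith only [hcc, hneg]
    have hyhge : el n ≤ M (x+h) := by
      by_contra hc
      push_neg at hc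
      have hcc := hmono hyh_mem (hel_mem n) hc
      rw [hLyh] at hcc
      linarith only [hcc, hub]
    have hTbd : |T (M (x+h)) - T y| ≤ ((n:ℝ)+2)/2^n := by
      have habs : |M (x+h) - y| ≤ 1/2^n := by
        rw [abs_of_neg (by linarith only [hyhlt] : M (x+h) - y < 0)]
        have h1 := (hyel n).2
        linarith only [h1, hyhge]
      exact takagi_modulus T hT (M (x+h)) y n habs
    have hexm : ∃ m : ℕ, n+2 ≤ m ∧ ε m = 1 := by
      obtain ⟨m, hm1, hm2⟩ := hinf1 (n+2)
      exact ⟨m, hm1, hm2⟩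
    have hmm_spec := Nat.find_spec hexm
    have hmm_min : ∀ j, n+2 ≤ j → j < Nat.find hexm → ε j = 0 := by
      intro j hj1 hj2
      have hmin := Nat.find_min hexm hj2
      push_neg at hmin
      have := hmin hj1
      have := hε j
      omega
    set r : ℕ := Nat.find hexm - (n+2) with hrdef
    have hqq : Nat.find hexm = (n+1+r) + 1 := by omega
    clear_value r
    have hel_run : ∀ i, i ≤ r → el (n+1+i) = el (n+1) := by
      intro i hi
      induction i with
      | zero => rfl
      | succ i ih =>
        have hd0' : ε ((n+1+i)+1) = 0 := hmm_min ((n+1+i)+1) (by omega) (by omega)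
        have hstep : el (n+1+(i+1)) = el (n+1+i) := by
          rw [show n+1+(i+1) = (n+1+i)+1 from rfl, hel_succ (n+1+i), hd0']
          norm_num
        rw [hstep]
        exact ih (by omega)
    have hSr_run : Sr (n+1+r) = Sr (n+1) := by
      have haux : ∀ i, i ≤ r → Sr (n+1+i) = Sr (n+1) := by
        intro i hi
        induction i with
        | zero => rfl
        | succ i ih =>
          have hd0' : ε ((n+1+i)+1) = 0 := hmm_min ((n+1+i)+1) (by omega) (by omega)
          rw [show n+1+(i+1) = (n+1+i)+1 from rfl, hSr_succ (n+1+i), hd0', ih (by omega)]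
          norm_num
      exact haux r le_rfl
    have hKr : (K:ℝ) * r ≤ n := by
      apply hNr0 n (by omega) r
      push_cast
      rw [hSr_run]
      ring
    have hel_mm : el ((n+1+r)+1) = el (n+1+r) + 1/2^((n+1+r)+1) := by
      rw [hel_succ (n+1+r), show ε ((n+1+r)+1) = 1 from hqq ▸ hmm_spec.2]
      norm_num
    have hy_gt_mid : el (n+1+r) + 1/2^((n+1+r)+1) ≤ y := by
      have hh := (hyel ((n+1+r)+1)).1
      rw [hel_mm] at hh
      exact hh.le
    have hmeas := hleftmid (n+1+r)
    have helqq : el (n+1+r) = el (n+1) := hel_run r le_rfl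
    have hmid_le : L (el (n+1+r) + 1/2^((n+1+r)+1)) ≤ x := by
      rw [← hxy]
      exact hLmono (hmid_mem (n+1+r)) hy_mem hy_gt_mid
    have hh_gt : P (n+1+r) * a < -h := by
      have h1 : x + h < L (el (n+1+r)) := by
        rw [helqq]
        exact hlb
      linarith only [hmeas, hmid_le, h1]
    have hc3 := hN3 n (by omega) r hKr
    have hβP : β^(n+1+r) ≤ P (n+1+r) := hNB (n+1+r) (by omega)
    have hfinal : |T (M (x+h)) - T y| < η * (-h) := by
      calc |T (M (x+h)) - T y| ≤ ((n:ℝ)+2)/2^n := hTbd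
        _ ≤ η*γ*β^(n+1+r) := hc3
        _ ≤ η*a*(P (n+1+r)) := by
            apply mul_le_mul (mul_le_mul_of_nonneg_left hγa hη.le) hβP
              (pow_nonneg hβpos.le _) (by positivity)
        _ < η * (-h) := by
            have hmul := mul_lt_mul_of_pos_left hh_gt hη
            calc η*a*(P (n+1+r)) = η * (P (n+1+r) * a) := by ring
              _ < η * (-h) := hmul
    rw [abs_div, abs_of_neg hneg, div_lt_iff₀ (by linarith only [hneg] : (0:ℝ) < -h)]
    calc |T (M (x+h)) - T (M x)| = |T (M (x+h)) - T y| := by rw [hydef]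
      _ < η * (-h) := hfinal
  · -- positive h
    have hhub : x + h < L (el N + 1/2^N) := by
      have hm := lt_of_lt_of_le hdist (min_le_left _ _)
      rw [abs_of_pos hpos] at hm
      linarith only [hm]
    have hrtN_le1 : L (el N + 1/2^N) ≤ 1 :=
      (hLmono (hrt_mem N) h1mem (hrt_mem N).2).trans_eq hL1
    have hxh_mem : x + h ∈ Set.Icc (0:ℝ) 1 :=
      ⟨by linarith only [hx.1, hpos], by linarith only [hhub, hrtN_le1]⟩
    have hex : ∃ j : ℕ, L (el j + 1/2^j) < x + h :=
      (hrt_tend.eventually_lt_const (by linarith only [hpos] : x < x + h)).exists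
    have hm'N : N < Nat.find hex := by
      rw [Nat.lt_find_iff]
      intro j hjN
      push_neg
      have hrtmono : el N + 1/2^N ≤ el j + 1/2^j := hrt_anti hjN
      have := hLmono (hrt_mem N) (hrt_mem j) hrtmono
      linarith only [this, hhub]
    set n : ℕ := Nat.find hex - 1 with hndef
    have hm'eq : Nat.find hex = n + 1 := by omega
    clear_value n
    have hnN : N ≤ n := by omega
    have hub : x + h ≤ L (el n + 1/2^n) := by
      have hmin := Nat.find_min hex (show n < Nat.find hex by omega)
      push_neg at hmin
      exact hmin
    have hlb : L (el (n+1) + 1/2^(n+1)) < x + h := by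
      rw [← hm'eq]
      exact Nat.find_spec hex
    -- the point y_h
    have hyh_mem := hMval (x+h) hxh_mem
    have hLyh : L (M (x+h)) = x + h := hM2 _ hxh_mem
    have hyhgt : y < M (x+h) := by
      by_contra hc
      push_neg at hc
      have hcc := hLmono hyh_mem hy_mem hc
      rw [hLyh, hxy] at hcc
      linarith only [hcc, hpos]
    have hyhle : M (x+h) ≤ el n + 1/2^n := by
      by_contra hc
      push_neg at hc
      have hcc := hmono (hrt_mem n) hyh_mem hc
      rw [hLyh] at hcc
      linarith only [hcc, hub]
    have hTbd : |T (M (x+h)) - T y| ≤ ((n:ℝ)+2)/2^n := by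
      have habs : |M (x+h) - y| ≤ 1/2^n := by
        rw [abs_of_pos (by linarith only [hyhgt] : 0 < M (x+h) - y)]
        have h1 := (hyel n).1
        linarith only [h1, hyhle]
      exact takagi_modulus T hT (M (x+h)) y n habs
    -- run of ones after position n+1
    have hexm : ∃ m : ℕ, n+2 ≤ m ∧ ε m = 0 := by
      obtain ⟨m, hm1, hm2⟩ := hinf0 (n+2)
      exact ⟨m, hm1, hm2⟩
    have hmm_spec := Nat.find_spec hexm
    have hmm_min : ∀ j, n+2 ≤ j → j < Nat.find hexm → ε j = 1 := by
      intro j hj1 hj2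
      have hmin := Nat.find_min hexm hj2
      push_neg at hmin
      have := hmin hj1
      have := hε j
      omega
    set r : ℕ := Nat.find hexm - (n+2) with hrdef
    have hqq : Nat.find hexm = (n+1+r) + 1 := by omega
    clear_value r
    have hrt_run : ∀ i, i ≤ r → el (n+1+i) + 1/2^(n+1+i) = el (n+1) + 1/2^(n+1) := by
      intro i hi
      induction i with
      | zero => rfl
      | succ i ih =>
        have hd1' : ε ((n+1+i)+1) = 1 := hmm_min ((n+1+i)+1) (by omega) (by omega)
        have hstep : el (n+1+(i+1)) + 1/2^(n+1+(i+1))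
            = el (n+1+i) + 1/2^(n+1+i) := by
          have he := hel_succ (n+1+i)
          rw [show n+1+(i+1) = (n+1+i)+1 from rfl, he, hd1']
          push_cast
          rw [pow_succ]
          ring
        rw [hstep]
        exact ih (by omega)
    have hSr_run : Sr (n+1+r) - Sr (n+1) = (r:ℝ) := by
      have haux : ∀ i, i ≤ r → Sr (n+1+i) = Sr (n+1) + i := by
        intro i hi
        induction i with
        | zero => simp
        | succ i ih =>
          have hd1' : ε ((n+1+i)+1) = 1 := hmm_min ((n+1+i)+1) (by omega) (by omega)
          rw [show n+1+(i+1) = (n+1+i)+1 from rfl, hSr_succ (n+1+i), hd1', ih (by omega)]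
          push_cast
          ring
      rw [haux r le_rfl]
      ring
    have hKr : (K:ℝ) * r ≤ n := hNr1 n (by omega) r hSr_run
    -- digit at the end of the run is 0
    have hel_mm : el ((n+1+r)+1) = el (n+1+r) := by
      rw [hel_succ (n+1+r), show ε ((n+1+r)+1) = 0 from hqq ▸ hmm_spec.2]
      norm_num
    have hy_lt_mid : y < el (n+1+r) + 1/2^((n+1+r)+1) := by
      have hh := (hyel ((n+1+r)+1)).2
      rwa [hel_mm] at hh
    have hmeas := hmidrt (n+1+r)
    have hrtqq : el (n+1+r) + 1/2^(n+1+r) = el (n+1) + 1/2^(n+1) := hrt_run r le_rfl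
    have hmid_ge : x ≤ L (el (n+1+r) + 1/2^((n+1+r)+1)) := by
      rw [← hxy]
      exact hLmono hy_mem (hmid_mem (n+1+r)) hy_lt_mid.le
    have hh_gt : P (n+1+r) * (1-a) < h := by
      have h1 : L (el (n+1+r) + 1/2^(n+1+r)) < x + h := by
        rw [hrtqq]
        exact hlb
      linarith only [hmeas, hmid_ge, h1]
    have hc3 := hN3 n (by omega) r hKr
    have hβP : β^(n+1+r) ≤ P (n+1+r) := hNB (n+1+r) (by omega)
    have hfinal : |T (M (x+h)) - T y| < η * h := by
      calc |T (M (x+h)) - T y| ≤ ((n:ℝ)+2)/2^n := hTbd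
        _ ≤ η*γ*β^(n+1+r) := hc3
        _ ≤ η*(1-a)*(P (n+1+r)) := by
            apply mul_le_mul (mul_le_mul_of_nonneg_left hγa' hη.le) hβP
              (pow_nonneg hβpos.le _) (by positivity)
        _ < η * h := by
            have hmul := mul_lt_mul_of_pos_left hh_gt hη
            calc η*(1-a)*(P (n+1+r)) = η * (P (n+1+r) * (1-a)) := by ring
              _ < η * h := hmul
    rw [abs_div, abs_of_pos hpos, div_lt_iff₀ hpos]
    calc |T (M (x+h)) - T (M x)| = |T (M (x+h)) - T y| := by rw [hydef]
      _ < η * h := hfinal
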